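/- Let $n, k$ be positive integers with $\gcd(k,n)=1$ and let $F$ be a finite field with $2^n$ elements. If $x, y, z, w \in F$ are pairwise distinct and satisfy $x + y + z + w = 0$, then $x^{2^k+1} + y^{2^k+1} + z^{2^k+1} + w^{2^k+1} \neq 0$. -/

import Mathlib

theorem stmt_13 (n k : ℕ) (hn : 0 < n) (hk : 0 < k) (hgcd : Nat.gcd k n = 1)
    (F : Type*) [Field F] [Fintype F] (hF : Fintype.card F = 2 ^ n)
    (x y z w : F) (hxy : x ≠ y) (hxz : x ≠ z) (hxw : x ≠ w)
    (hyz : y ≠ z) (hyw : y ≠ w) (hzw : z ≠ w)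
    (hsum : x + y + z + w = 0) :
    x ^ (2 ^ k + 1) + y ^ (2 ^ k + 1) + z ^ (2 ^ k + 1) + w ^ (2 ^ k + 1) ≠ 0 := by
  intro h
  haveI : Fact (Nat.Prime 2) := ⟨Nat.prime_two⟩
  have hchar : ringChar F = 2 := by
    rw [FiniteField.even_card_iff_char_two, hF]
    have : (2:ℕ) ∣ 2 ^ n := dvd_pow_self 2 hn.ne'
    omega
  haveI hcp : CharP F 2 := by rw [← hchar]; exact ringChar.charP F
  have h2 : (2 : F) = 0 := by
    have := CharP.cast_eq_zero F 2
    exact_mod_cast this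
  -- n ≥ 2
  have hn2 : 1 < n := by
    classical
    by_contra hle
    have hn1 : n = 1 := by omega
    have hcard : Fintype.card F = 2 := by rw [hF, hn1, pow_one]
    have hle3 : ({x, y, z} : Finset F).card ≤ Fintype.card F := Finset.card_le_univ _
    have h3 : ({x, y, z} : Finset F).card = 3 := by
      rw [Finset.card_insert_of_notMem (by simp [hxy, hxz]),
          Finset.card_insert_of_notMem (by simp [hyz]), Finset.card_singleton]
    omega
  obtain ⟨a, rfl⟩ : ∃ a, y = x + a := ⟨y - x, by ring⟩
  obtain ⟨b, rfl⟩ : ∃ b, z = x + b := ⟨z - x, by ring⟩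
  have ha0 : a ≠ 0 := fun h0 => hxy (by rw [h0, add_zero])
  have hb0 : b ≠ 0 := fun h0 => hxz (by rw [h0, add_zero])
  have hab : a ≠ b := fun h0 => hyz (by rw [h0])
  have hw : w = x + a + b := by linear_combination hsum + (-2*x - a - b) * h2
  rw [hw] at h
  set q := 2 ^ k with hq
  have F1 : (x + a) ^ (q + 1) = (x ^ q + a ^ q) * (x + a) := by
    rw [pow_succ, add_pow_char_pow]
  have F2 : (x + b) ^ (q + 1) = (x ^ q + b ^ q) * (x + b) := by
    rw [pow_succ, add_pow_char_pow]
  have F3 : (x + a + b) ^ (q + 1) = (x ^ q + a ^ q + b ^ q) * (x + a + b) := by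
    rw [pow_succ, add_pow_char_pow, add_pow_char_pow]
  have key : a * b ^ q + a ^ q * b = 0 := by
    linear_combination h - F1 - F2 - F3 -
      (2 * x ^ q * x + x ^ q * a + x * a ^ q + a ^ q * a + x ^ q * b + x * b ^ q + b ^ q * b) * h2
  set c : F := b * a⁻¹ with hc
  have hc0 : c ≠ 0 := mul_ne_zero hb0 (inv_ne_zero ha0)
  have hcq : c ^ q = c := by
    have h1 : b ^ q * a = b * a ^ q := by linear_combination key - (a ^ q * b) * h2
    rw [hc, mul_pow, inv_pow, inv_eq_one_div, inv_eq_one_div, mul_one_div, mul_one_div,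
      div_eq_div_iff (pow_ne_zero _ ha0) ha0]
    linear_combination h1
  have hiter : ∀ m, c ^ q ^ m = c := by
    intro m
    induction m with
    | zero => simp
    | succ m ih => rw [pow_succ, pow_mul, ih, hcq]
  have hcn : c ^ (2 ^ n) = c := by rw [← hF]; exact FiniteField.pow_card c
  have hitern : ∀ s, c ^ (2 ^ n) ^ s = c := by
    intro s
    induction s with
    | zero => simp
    | succ s ih => rw [pow_succ, pow_mul, ih, hcn]
  obtain ⟨m, -, hm⟩ := Nat.exists_mul_mod_eq_one_of_coprime (show Nat.Coprime k n from hgcd) hn2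
  have hdm := Nat.div_add_mod (k * m) n
  have heq : k * m = n * (k * m / n) + 1 := by omega
  have hc2 : c ^ 2 = c := by
    calc c ^ 2 = (c ^ (2 ^ n) ^ (k * m / n)) ^ 2 := by rw [hitern]
      _ = c ^ (2 ^ (n * (k * m / n) + 1)) := by
          rw [← pow_mul, ← pow_mul, pow_succ]
      _ = c ^ (2 ^ (k * m)) := by rw [← heq]
      _ = c ^ q ^ m := by rw [hq, ← pow_mul]
      _ = c := hiter m
  have hc1 : c = 1 := by
    have := mul_left_cancel₀ hc0 (show c * c = c * 1 by rw [mul_one, ← pow_two, hc2])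
    exact this
  have hba : b = a := by
    have : b * a⁻¹ * a = 1 * a := by rw [← hc, hc1]
    rwa [mul_assoc, inv_mul_cancel₀ ha0, mul_one, one_mul] at this
  exact hab hba.symm
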